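/- Let Λ = {(W_j, Λ_j, w_j)} and Γ = {(V_j, Γ_j, v_j)} be g-fusion Bessel sequences in H with bounds D₁ and D₂ respectively. Then the frame operator S_{ΓΛ} f = Σ_{j∈J} v_j w_j P_{V_j} Γ_j* Λ_j P_{W_j} f is a well-defined bounded operator with ‖S_{ΓΛ}‖ ≤ √(D₁D₂), and its adjoint satisfies S_{ΓΛ}* = S_{ΛΓ}. -/

import Mathlib

open ContinuousLinearMap

noncomputable def proj {E : Type*} [NormedAddCommGroup E] [InnerProductSpace ℂ E]
    (W : Submodule ℂ E) [CompleteSpace W] : E →L[ℂ] E :=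
  W.subtypeL.comp (Submodule.orthogonalProjectionOnto W)

local notation "⟪" x ", " y "⟫" => @inner ℂ _ _ x y

lemma proj_coe_eq {E : Type*} [NormedAddCommGroup E] [InnerProductSpace ℂ E]
    (W : Submodule ℂ E) [CompleteSpace W] (x : E) :
    proj W x = ↑(Submodule.orthogonalProjectionOnto W x) := rfl

lemma inner_term {E Gj : Type*} [NormedAddCommGroup E] [InnerProductSpace ℂ E] [CompleteSpace E]
    [NormedAddCommGroup Gj] [InnerProductSpace ℂ Gj] [CompleteSpace Gj]
    (V : Submodule ℂ E) [CompleteSpace V] (Γ : E →L[ℂ] Gj) (c : ℝ) (x : Gj) (g : E) :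
    ⟪g, c • proj V (ContinuousLinearMap.adjoint Γ x)⟫ = (c : ℂ) * ⟪Γ (proj V g), x⟫ := by
  rw [show (c • (proj V (ContinuousLinearMap.adjoint Γ x)) : E)
      = (c : ℂ) • proj V (ContinuousLinearMap.adjoint Γ x) from rfl, inner_smul_right]
  congr 1
  rw [proj_coe_eq, ← Submodule.starProjection_apply, ← Submodule.inner_starProjection_left_eq_right,
    Submodule.starProjection_apply, ← proj_coe_eq,
    ContinuousLinearMap.adjoint_inner_right]

section Aux
variable {ι E : Type*} [NormedAddCommGroup E] [InnerProductSpace ℂ E] [CompleteSpace E]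
    {G : ι → Type*} [∀ j, NormedAddCommGroup (G j)] [∀ j, InnerProductSpace ℂ (G j)]
    [∀ j, CompleteSpace (G j)]

lemma key (W V' : ι → Submodule ℂ E) [∀ j, CompleteSpace (W j)] [∀ j, CompleteSpace (V' j)]
    (w v : ι → ℝ) (Λ Γ : ∀ j, E →L[ℂ] G j) (f g : E) (F : Finset ι) :
    ‖⟪g, ∑ j ∈ F, (v j * w j) • proj (V' j)
        (ContinuousLinearMap.adjoint (Γ j) (Λ j (proj (W j) f)))⟫‖ ≤
      Real.sqrt (∑ j ∈ F, (v j) ^ 2 * ‖Γ j (proj (V' j) g)‖ ^ 2) *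
      Real.sqrt (∑ j ∈ F, (w j) ^ 2 * ‖Λ j (proj (W j) f)‖ ^ 2) := by
  rw [inner_sum]
  calc ‖∑ j ∈ F, ⟪g, (v j * w j) • proj (V' j)
        (ContinuousLinearMap.adjoint (Γ j) (Λ j (proj (W j) f)))⟫‖
      ≤ ∑ j ∈ F, ‖⟪g, (v j * w j) • proj (V' j)
        (ContinuousLinearMap.adjoint (Γ j) (Λ j (proj (W j) f)))⟫‖ := norm_sum_le _ _
    _ ≤ ∑ j ∈ F, Real.sqrt ((v j) ^ 2 * ‖Γ j (proj (V' j) g)‖ ^ 2) *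
          Real.sqrt ((w j) ^ 2 * ‖Λ j (proj (W j) f)‖ ^ 2) := by
        refine Finset.sum_le_sum fun j _ => ?_
        rw [inner_term, norm_mul]
        have h1 : ‖((v j * w j : ℝ) : ℂ)‖ = |v j| * |w j| := by
          rw [Complex.norm_real, Real.norm_eq_abs, abs_mul]
        have h2 : Real.sqrt ((v j) ^ 2 * ‖Γ j (proj (V' j) g)‖ ^ 2)
            = |v j| * ‖Γ j (proj (V' j) g)‖ := by
          rw [Real.sqrt_mul (sq_nonneg _), Real.sqrt_sq_eq_abs, Real.sqrt_sq (norm_nonneg _)]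
        have h3 : Real.sqrt ((w j) ^ 2 * ‖Λ j (proj (W j) f)‖ ^ 2)
            = |w j| * ‖Λ j (proj (W j) f)‖ := by
          rw [Real.sqrt_mul (sq_nonneg _), Real.sqrt_sq_eq_abs, Real.sqrt_sq (norm_nonneg _)]
        rw [h1, h2, h3]
        have := norm_inner_le_norm (𝕜 := ℂ) (Γ j (proj (V' j) g)) (Λ j (proj (W j) f))
        have hv : (0:ℝ) ≤ |v j| * |w j| := by positivity
        nlinarith [norm_nonneg (⟪Γ j (proj (V' j) g), Λ j (proj (W j) f)⟫),
          norm_nonneg (Γ j (proj (V' j) g)), norm_nonneg (Λ j (proj (W j) f)),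
          abs_nonneg (v j), abs_nonneg (w j)]
    _ ≤ _ := Real.sum_sqrt_mul_sqrt_le F (fun j => by positivity) (fun j => by positivity)

end Aux
section Aux2
variable {ι E : Type*} [NormedAddCommGroup E] [InnerProductSpace ℂ E] [CompleteSpace E]
    {G : ι → Type*} [∀ j, NormedAddCommGroup (G j)] [∀ j, InnerProductSpace ℂ (G j)]
    [∀ j, CompleteSpace (G j)]

lemma aux_exists (W V' : ι → Submodule ℂ E) [∀ j, CompleteSpace (W j)] [∀ j, CompleteSpace (V' j)]
    (w v : ι → ℝ) (Λ Γ : ∀ j, E →L[ℂ] G j) (D₁ D₂ : ℝ)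
    (hΛ : ∀ f : E, Summable (fun j => (w j) ^ 2 * ‖Λ j (proj (W j) f)‖ ^ 2) ∧
      ∑' j, (w j) ^ 2 * ‖Λ j (proj (W j) f)‖ ^ 2 ≤ D₁ * ‖f‖ ^ 2)
    (hΓ : ∀ f : E, Summable (fun j => (v j) ^ 2 * ‖Γ j (proj (V' j) f)‖ ^ 2) ∧
      ∑' j, (v j) ^ 2 * ‖Γ j (proj (V' j) f)‖ ^ 2 ≤ D₂ * ‖f‖ ^ 2) :
    ∃ S : E →L[ℂ] E,
      (∀ f : E, HasSum (fun j => (v j * w j) • proj (V' j)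
        (ContinuousLinearMap.adjoint (Γ j) (Λ j (proj (W j) f)))) (S f)) ∧
      ‖S‖ ≤ Real.sqrt D₂ * Real.sqrt D₁ := by
  set u : E → ι → E := fun f j => (v j * w j) • proj (V' j)
    (ContinuousLinearMap.adjoint (Γ j) (Λ j (proj (W j) f))) with hu
  set A : E → Finset ι → ℝ := fun f F => ∑ j ∈ F, (w j) ^ 2 * ‖Λ j (proj (W j) f)‖ ^ 2 with hA
  -- partial sum norm bound
  have normF : ∀ (f : E) (F : Finset ι),
      ‖∑ j ∈ F, u f j‖ ≤ Real.sqrt D₂ * Real.sqrt (A f F) := by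
    intro f F
    set x := ∑ j ∈ F, u f j with hx
    have hBsum : ∑ j ∈ F, (v j) ^ 2 * ‖Γ j (proj (V' j) x)‖ ^ 2 ≤ D₂ * ‖x‖ ^ 2 := by
      refine le_trans ?_ (hΓ x).2
      exact Summable.sum_le_tsum F (fun j _ => by positivity) (hΓ x).1
    have hsqB : Real.sqrt (∑ j ∈ F, (v j) ^ 2 * ‖Γ j (proj (V' j) x)‖ ^ 2)
        ≤ ‖x‖ * Real.sqrt D₂ := by
      refine le_trans (Real.sqrt_le_sqrt hBsum) ?_
      rw [mul_comm D₂, Real.sqrt_mul (sq_nonneg _), Real.sqrt_sq (norm_nonneg _)]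
    have hxx : ‖x‖ ^ 2 ≤ ‖(⟪x, x⟫ : ℂ)‖ := by
      rw [← @inner_self_eq_norm_sq ℂ]
      exact Complex.re_le_norm _
    have hk := key W V' w v Λ Γ f x F
    rw [← hx] at hk
    have h2 : ‖x‖ ^ 2 ≤ (‖x‖ * Real.sqrt D₂) * Real.sqrt (A f F) := by
      refine le_trans (hxx.trans hk) ?_
      exact mul_le_mul_of_nonneg_right hsqB (Real.sqrt_nonneg _)
    rcases eq_or_lt_of_le (norm_nonneg x) with h0 | h0
    · rw [← h0]; positivity
    · nlinarith [Real.sqrt_nonneg D₂, Real.sqrt_nonneg (A f F)]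
  -- summability
  have hsum : ∀ f : E, Summable (u f) := by
    intro f
    rw [summable_iff_vanishing_norm]
    intro ε hε
    have hden : (0:ℝ) < Real.sqrt D₂ + 1 := by positivity
    set c := ε / (Real.sqrt D₂ + 1) with hc
    have hcpos : 0 < c := div_pos hε hden
    obtain ⟨s, hs⟩ := summable_iff_vanishing_norm.mp (hΛ f).1 (c ^ 2) (by positivity)
    refine ⟨s, fun t ht => ?_⟩
    have h1 := normF f t
    have h2 : A f t < c ^ 2 := by
      have := hs t ht
      rwa [Real.norm_eq_abs, abs_of_nonneg (Finset.sum_nonneg fun j _ => by positivity)] at this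
    have h3 : Real.sqrt (A f t) ≤ c := by
      refine le_trans (Real.sqrt_le_sqrt h2.le) ?_
      rw [Real.sqrt_sq hcpos.le]
    have h4 : Real.sqrt D₂ * c < ε := by
      have hmul : c * (Real.sqrt D₂ + 1) = ε := div_mul_cancel₀ _ hden.ne'
      nlinarith [Real.sqrt_nonneg D₂]
    calc ‖∑ j ∈ t, u f j‖ ≤ Real.sqrt D₂ * Real.sqrt (A f t) := h1
      _ ≤ Real.sqrt D₂ * c := mul_le_mul_of_nonneg_left h3 (Real.sqrt_nonneg _)
      _ < ε := h4
  -- the norm bound for the limit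
  have bound : ∀ f : E, ‖∑' j, u f j‖ ≤ Real.sqrt D₂ * Real.sqrt D₁ * ‖f‖ := by
    intro f
    have hten := (hsum f).hasSum
    refine le_of_tendsto' hten.norm fun F => ?_
    have h1 := normF f F
    have h2 : A f F ≤ D₁ * ‖f‖ ^ 2 := by
      refine le_trans ?_ (hΛ f).2
      exact Summable.sum_le_tsum F (fun j _ => by positivity) (hΛ f).1
    have h3 : Real.sqrt (A f F) ≤ Real.sqrt D₁ * ‖f‖ := by
      refine le_trans (Real.sqrt_le_sqrt h2) ?_
      rw [mul_comm D₁, Real.sqrt_mul (sq_nonneg _), Real.sqrt_sq (norm_nonneg _)]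
      rw [mul_comm]
    calc ‖∑ j ∈ F, u f j‖ ≤ Real.sqrt D₂ * Real.sqrt (A f F) := h1
      _ ≤ Real.sqrt D₂ * (Real.sqrt D₁ * ‖f‖) :=
          mul_le_mul_of_nonneg_left h3 (Real.sqrt_nonneg _)
      _ = Real.sqrt D₂ * Real.sqrt D₁ * ‖f‖ := by ring
  -- linear map
  let S0 : E →ₗ[ℂ] E :=
    { toFun := fun f => ∑' j, u f j
      map_add' := by
        intro f g
        show (∑' j, u (f + g) j) = (∑' j, u f j) + ∑' j, u g j
        rw [tsum_congr (fun j => show u (f + g) j = u f j + u g j by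
          simp [hu, map_add, smul_add])]
        exact Summable.tsum_add (hsum f) (hsum g)
      map_smul' := by
        intro c f
        show (∑' j, u (c • f) j) = c • ∑' j, u f j
        rw [tsum_congr (fun j => show u (c • f) j = c • u f j by
          simp only [hu, map_smul]; rw [smul_comm])]
        exact Summable.tsum_const_smul c (hsum f)
      }
  refine ⟨S0.mkContinuous (Real.sqrt D₂ * Real.sqrt D₁) bound, fun f => ?_, ?_⟩
  · exact (hsum f).hasSum
  · exact S0.mkContinuous_norm_le (by positivity) bound

end Aux2

lemma sqrt_mul_sqrt_le {D₁ D₂ : ℝ} : Real.sqrt D₂ * Real.sqrt D₁ ≤ Real.sqrt (D₁ * D₂) := by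
  rcases le_or_gt 0 D₁ with h | h
  · rw [Real.sqrt_mul h, mul_comm]
  · rw [Real.sqrt_eq_zero_of_nonpos h.le, mul_zero]
    exact Real.sqrt_nonneg _


/-- the frame operator S_{ΓΛ} of a pair of g-fusion Bessel sequences is a
well-defined bounded operator with ‖S_{ΓΛ}‖ ≤ √(D₁D₂) and S_{ΓΛ}* = S_{ΛΓ}. -/
theorem stmt9 {ι E : Type*} [NormedAddCommGroup E] [InnerProductSpace ℂ E] [CompleteSpace E]
    {G : ι → Type*} [∀ j, NormedAddCommGroup (G j)] [∀ j, InnerProductSpace ℂ (G j)]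
    [∀ j, CompleteSpace (G j)]
    (W V' : ι → Submodule ℂ E) [∀ j, CompleteSpace (W j)] [∀ j, CompleteSpace (V' j)]
    (w v : ι → ℝ) (hw : ∀ j, 0 < w j) (hv : ∀ j, 0 < v j)
    (Λ Γ : ∀ j, E →L[ℂ] G j)
    (D₁ D₂ : ℝ)
    (hΛ : ∀ f : E, Summable (fun j => (w j) ^ 2 * ‖Λ j (proj (W j) f)‖ ^ 2) ∧
      ∑' j, (w j) ^ 2 * ‖Λ j (proj (W j) f)‖ ^ 2 ≤ D₁ * ‖f‖ ^ 2)
    (hΓ : ∀ f : E, Summable (fun j => (v j) ^ 2 * ‖Γ j (proj (V' j) f)‖ ^ 2) ∧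
      ∑' j, (v j) ^ 2 * ‖Γ j (proj (V' j) f)‖ ^ 2 ≤ D₂ * ‖f‖ ^ 2) :
    ∃ S : E →L[ℂ] E,
      (∀ f : E, HasSum
        (fun j => (v j * w j) • proj (V' j)
          (ContinuousLinearMap.adjoint (Γ j) (Λ j (proj (W j) f)))) (S f)) ∧
      ‖S‖ ≤ Real.sqrt (D₁ * D₂) ∧
      ∃ S' : E →L[ℂ] E,
        (∀ f : E, HasSum
          (fun j => (w j * v j) • proj (W j)
            (ContinuousLinearMap.adjoint (Λ j) (Γ j (proj (V' j) f)))) (S' f)) ∧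
        ContinuousLinearMap.adjoint S = S' := by
  obtain ⟨S, hS, hSn⟩ := aux_exists W V' w v Λ Γ D₁ D₂ hΛ hΓ
  obtain ⟨S', hS', -⟩ := aux_exists V' W v w Γ Λ D₂ D₁ hΓ hΛ
  refine ⟨S, hS, hSn.trans sqrt_mul_sqrt_le, S', hS', ?_⟩
  ext f
  refine ext_inner_right ℂ fun g => ?_
  rw [ContinuousLinearMap.adjoint_inner_left]
  have h1 : HasSum (fun j => ⟪f, (v j * w j) • proj (V' j)
      (ContinuousLinearMap.adjoint (Γ j) (Λ j (proj (W j) g)))⟫) ⟪f, S g⟫ :=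
    (innerSL ℂ f).hasSum (hS g)
  have h2 : HasSum (fun j => ⟪g, (w j * v j) • proj (W j)
      (ContinuousLinearMap.adjoint (Λ j) (Γ j (proj (V' j) f)))⟫) ⟪g, S' f⟫ :=
    (innerSL ℂ g).hasSum (hS' f)
  have h3 : HasSum (fun j => (starRingEnd ℂ) ⟪g, (w j * v j) • proj (W j)
      (ContinuousLinearMap.adjoint (Λ j) (Γ j (proj (V' j) f)))⟫)
      ((starRingEnd ℂ) ⟪g, S' f⟫) :=
    h2.map ((starRingEnd ℂ) : ℂ →+* ℂ).toAddMonoidHom Complex.continuous_conj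
  rw [inner_conj_symm] at h3
  refine h1.unique ?_
  convert h3 using 2 with j
  rw [inner_term, inner_term, map_mul, Complex.conj_ofReal, inner_conj_symm, mul_comm (w j)]
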